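/- Let a = (1,1), let b ∈ R_+^2 with b ≠ a, let δ > 0, and let b' be the point on the segment from a to b with |b' - a| = |b - a|/(1+δ). For any r on the segment from b' to b, set κ = |r - b| / |b' - b| ∈ [0,1]. Then the point r' := r(1+δ) - κ δ a satisfies: r' lies on the ray from the origin through b, between b and b(1+δ). -/

import Mathlib

/-- With `a = (1,1)`, `b ≠ a`, `δ > 0`, `b'` the point on the
segment from `a` to `b` with `|b' - a| = |b - a|/(1+δ)`, and `r` on the
segment from `b'` to `b` with `κ = |r - b|/|b' - b|`, the point
`r' = (1+δ)r - κδa` lies on the ray from the origin through `b`, between `b`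
and `(1+δ)b`. Distances are Euclidean. -/
theorem stmt8 (a b b' r r' : EuclideanSpace ℝ (Fin 2)) (δ : ℝ) (hδ : 0 < δ)
    (ha : a = (EuclideanSpace.equiv (Fin 2) ℝ).symm ![1, 1]) (hab : b ≠ a)
    (hb' : b' = a + (1 / (1 + δ)) • (b - a))
    (hr : r ∈ segment ℝ b' b)
    (κ : ℝ) (hκ : κ = ‖r - b‖ / ‖b' - b‖)
    (hr' : r' = (1 + δ) • r - (κ * δ) • a) :
    ∃ s : ℝ, s ∈ Set.Icc (1 : ℝ) (1 + δ) ∧ r' = s • b := by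
  obtain ⟨u, v, hu, hv, huv, hrsum⟩ := hr
  have hδ0 : (1 : ℝ) + δ ≠ 0 := by positivity
  have hab' : a - b ≠ 0 := sub_ne_zero.mpr (Ne.symm hab)
  have hb'b : b' - b = (δ / (1 + δ)) • (a - b) := by
    rw [hb']
    match_scalars <;> field_simp <;> ring
  have hb'bne : b' - b ≠ 0 := by
    rw [hb'b]
    exact smul_ne_zero (by positivity) hab'
  have hrb : r - b = u • (b' - b) := by
    have hv' : v = 1 - u := by linarith
    rw [← hrsum, hv']
    match_scalars <;> ring
  have hκu : κ = u := by
    rw [hκ, hrb, norm_smul, Real.norm_eq_abs, abs_of_nonneg hu,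
      mul_div_assoc, div_self (norm_ne_zero_iff.mpr hb'bne), mul_one]
  refine ⟨1 + v * δ, ⟨by nlinarith, by nlinarith⟩, ?_⟩
  have hu' : u = 1 - v := by linarith
  rw [hr', ← hrsum, hb', hκu, hu']
  match_scalars <;> field_simp <;> ring
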